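/- Let Δ₁ = {Δ_t^z} be a one-point transition energy field on finite Λ with finite state space X. Define q_t^z(x) = exp(Δ_t^z(x,u)) / Σ_{α∈X} exp(Δ_t^z(α,u)) for a fixed u ∈ X. Then: (a) q_t^z(x) does not depend on the choice of u; (b) each q_t^z is a strictly positive probability distribution on X; and (c) the family {q_t^z} satisfies the consistency conditions (2). -/
import Mathlib


def cat {Λ X : Type*} [DecidableEq Λ] (t : Λ) (x : X) (z : {s : Λ // s ≠ t} → X) : Λ → X :=
  fun s => if h : s = t then x else z ⟨s, h⟩

def catT {Λ X : Type*} [DecidableEq Λ] (t s : Λ) (y : X) (z : {r : Λ // r ≠ t ∧ r ≠ s} → X) :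
    {r : Λ // r ≠ t} → X :=
  fun r => if h : r.1 = s then y else z ⟨r.1, r.2, h⟩

def catS {Λ X : Type*} [DecidableEq Λ] (t s : Λ) (x : X) (z : {r : Λ // r ≠ t ∧ r ≠ s} → X) :
    {r : Λ // r ≠ s} → X :=
  fun r => if h : r.1 = t then x else z ⟨r.1, h, r.2⟩
/-- The Gibbs one-point distribution built from a transition energy field, with
reference configuration `u`. -/
noncomputable def tefQ {Λ X : Type*} [Fintype X]
    (Δ : ∀ t : Λ, ({s : Λ // s ≠ t} → X) → X → X → ℝ)
    (t : Λ) (z : {s : Λ // s ≠ t} → X) (u x : X) : ℝ :=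
  Real.exp (Δ t z x u) / ∑ α : X, Real.exp (Δ t z α u)

theorem stmt11 {Λ X : Type*} [DecidableEq Λ] [Fintype Λ] [Fintype X] [Nonempty X]
    (Δ : ∀ t : Λ, ({s : Λ // s ≠ t} → X) → X → X → ℝ)
    (hadd : ∀ t : Λ, ∀ z : {s : Λ // s ≠ t} → X, ∀ x u α : X,
      Δ t z x u = Δ t z x α + Δ t z α u)
    (hexch : ∀ t s : Λ, t ≠ s → ∀ x u y v : X, ∀ z : {r : Λ // r ≠ t ∧ r ≠ s} → X,
      Δ t (catT t s y z) x u + Δ s (catS t s u z) y v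
        = Δ s (catS t s x z) y v + Δ t (catT t s v z) x u) :
    (∀ t z x u u', tefQ Δ t z u x = tefQ Δ t z u' x) ∧
    (∀ t z u, (∀ x, 0 < tefQ Δ t z u x) ∧ ∑ x : X, tefQ Δ t z u x = 1) ∧
    (∀ u₀ : X, ∀ t s : Λ, t ≠ s → ∀ x u y v : X, ∀ z : {r : Λ // r ≠ t ∧ r ≠ s} → X,
      tefQ Δ t (catT t s y z) u₀ x * tefQ Δ s (catS t s x z) u₀ v
          * tefQ Δ t (catT t s v z) u₀ u * tefQ Δ s (catS t s u z) u₀ y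
        = tefQ Δ t (catT t s y z) u₀ u * tefQ Δ s (catS t s u z) u₀ v
            * tefQ Δ t (catT t s v z) u₀ x * tefQ Δ s (catS t s x z) u₀ y) := by
  have hSpos : ∀ (t : Λ) (z : {s : Λ // s ≠ t} → X) (u : X),
      0 < ∑ α : X, Real.exp (Δ t z α u) :=
    fun t z u => Finset.sum_pos (fun α _ => Real.exp_pos _) Finset.univ_nonempty
  refine ⟨?_, ?_, ?_⟩
  · intro t z x u u'
    have h1 : ∀ α, Real.exp (Δ t z α u)
        = Real.exp (Δ t z α u') * Real.exp (Δ t z u' u) := by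
      intro α
      rw [← Real.exp_add, ← hadd]
    have h2 : ∑ α : X, Real.exp (Δ t z α u)
        = (∑ α : X, Real.exp (Δ t z α u')) * Real.exp (Δ t z u' u) := by
      rw [Finset.sum_mul]
      exact Finset.sum_congr rfl fun α _ => h1 α
    unfold tefQ
    rw [h1 x, h2, mul_div_mul_right _ _ (Real.exp_ne_zero _)]
  · intro t z u
    refine ⟨fun x => div_pos (Real.exp_pos _) (hSpos t z u), ?_⟩
    unfold tefQ
    rw [← Finset.sum_div, div_self (hSpos t z u).ne']
  · intro u₀ t s hts x u y v z
    have anti : ∀ (t : Λ) (z : {s : Λ // s ≠ t} → X) (a b : X),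
        Δ t z a b = - Δ t z b a := by
      intro t z a b
      have h0 : Δ t z a a = Δ t z a b + Δ t z b a := hadd t z a a b
      have h1 : Δ t z a a = Δ t z a a + Δ t z a a := hadd t z a a a
      linarith
    have key : Δ t (catT t s y z) x u₀ + Δ s (catS t s x z) v u₀
          + Δ t (catT t s v z) u u₀ + Δ s (catS t s u z) y u₀
        = Δ t (catT t s y z) u u₀ + Δ s (catS t s u z) v u₀
          + Δ t (catT t s v z) x u₀ + Δ s (catS t s x z) y u₀ := by
      have e1 := hadd t (catT t s y z) x u₀ u
      have e2 := hadd t (catT t s v z) x u₀ u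
      have e3 := hadd s (catS t s x z) v u₀ y
      have e4 := hadd s (catS t s u z) v u₀ y
      have e5 := hexch t s hts x u y v z
      have a1 := anti s (catS t s x z) y v
      have a2 := anti s (catS t s u z) y v
      linarith
    have A := hSpos t (catT t s y z) u₀
    have B := hSpos s (catS t s x z) u₀
    have C := hSpos t (catT t s v z) u₀
    have D := hSpos s (catS t s u z) u₀
    unfold tefQ
    rw [div_mul_div_comm, div_mul_div_comm, div_mul_div_comm,
        div_mul_div_comm, div_mul_div_comm, div_mul_div_comm]
    rw [div_eq_div_iff (mul_pos (mul_pos (mul_pos A B) C) D).ne'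
      (mul_pos (mul_pos (mul_pos A D) C) B).ne']
    rw [← Real.exp_add, ← Real.exp_add, ← Real.exp_add, ← Real.exp_add,
        ← Real.exp_add, ← Real.exp_add, key]
    ring
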